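/- In the piecewise setting on [−1,1], assume additionally that every interior breakpoint satisfies b_i ∈ [−0.9, 0.9]. Then there exists a universal constant C > 0 (independent of N, K, g and the breakpoints) such that for every integer N ≥ 2, the tail sum of the squared jump terms satisfies Σ_{n=N}^∞ B_n² ≤ C·S²·ζ(2, N), where B_n = (1/(2√(2n+1)))·Σ_{i=1}^{K} (g_i(b_i) − g_{i+1}(b_i))·(P_{n+1}(b_i) − P_{n−1}(b_i)) and S = Σ_{i=1}^K |g_{i+1}(b_i) − g_i(b_i)|. -/

import Mathlib

open MeasureTheory Set

noncomputable def legendreP (n : ℕ) (y : ℝ) : ℝ :=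
  (1 / ((2 : ℝ) ^ n * (n.factorial : ℝ))) *
    iteratedDeriv n (fun x : ℝ => (x ^ 2 - 1) ^ n) y

noncomputable def hzeta (s a : ℝ) : ℝ := ∑' k : ℕ, ((k : ℝ) + a) ^ (-s)

noncomputable def legCoeff (g : ℝ → ℝ) (n : ℕ) : ℝ :=
  (Real.sqrt (2 * (n : ℝ) + 1) / 2) * ∫ y in (-1 : ℝ)..1, g y * legendreP n y

noncomputable def Aterm (K : ℕ) (b : ℕ → ℝ) (G : ℕ → ℝ → ℝ) (n : ℕ) : ℝ :=
  -(1 / (2 * Real.sqrt (2 * (n : ℝ) + 1))) *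
    ∑ i ∈ Finset.range (K + 1),
      ∫ y in (b i)..(b (i + 1)),
        derivWithin (G i) (Set.Icc (b i) (b (i + 1))) y *
          (legendreP (n + 1) y - legendreP (n - 1) y)

noncomputable def Bterm (K : ℕ) (b : ℕ → ℝ) (G : ℕ → ℝ → ℝ) (n : ℕ) : ℝ :=
  (1 / (2 * Real.sqrt (2 * (n : ℝ) + 1))) *
    ∑ i ∈ Finset.Icc 1 K,
      (G (i - 1) (b i) - G i (b i)) *
        (legendreP (n + 1) (b i) - legendreP (n - 1) (b i))

noncomputable def jumpSum (K : ℕ) (b : ℕ → ℝ) (G : ℕ → ℝ → ℝ) : ℝ :=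
  ∑ i ∈ Finset.Icc 1 K, |G i (b i) - G (i - 1) (b i)|

section LegendreAux

open Polynomial

lemma iteratedDeriv_polyeval (p : Polynomial ℝ) (k : ℕ) :
    iteratedDeriv k (fun x => p.eval x) = fun x => (derivative^[k] p).eval x := by
  induction k with
  | zero => simp
  | succ k ih =>
    rw [iteratedDeriv_succ, ih, Function.iterate_succ_apply']
    funext x
    exact Polynomial.deriv _

noncomputable def Vp (n : ℕ) : ℝ[X] := derivative^[n] ((X^2 - 1)^n)

lemma legendreP_eq (n : ℕ) (y : ℝ) :
    legendreP n y = (1 / ((2:ℝ)^n * n.factorial)) * (Vp n).eval y := by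
  have h : (fun x : ℝ => (x ^ 2 - 1) ^ n) = fun x => (((X:Polynomial ℝ)^2-1)^n).eval x := by
    funext x; simp
  rw [legendreP, h, iteratedDeriv_polyeval]; rfl

lemma E0 (n : ℕ) : (X^2-1) * derivative ((X^2-1:ℝ[X])^n) = (2*(n:ℝ[X])) * (X * (X^2-1)^n) := by
  cases n with
  | zero => simp
  | succ m =>
    rw [derivative_pow]
    simp only [Nat.add_sub_cancel, derivative_sub, derivative_one, derivative_X_pow,
      C_eq_natCast, map_ofNat, map_add, map_one, Nat.cast_ofNat, sub_zero, pow_one]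
    rw [pow_succ]
    push_cast
    ring

lemma odeQ (n : ℕ) : ∀ k : ℕ,
    (X^2-1) * derivative^[k+2] ((X^2-1:ℝ[X])^n) =
      (2*((n:ℝ[X]) - ((k:ℝ[X])+1))) * (X * derivative^[k+1] ((X^2-1)^n)) +
      (((k:ℝ[X])+1)*(2*(n:ℝ[X])-(k:ℝ[X]))) * derivative^[k] ((X^2-1)^n) := by
  intro k
  induction k with
  | zero =>
    have h := congrArg derivative (E0 n)
    simp only [derivative_mul, derivative_sub, derivative_one, derivative_X_pow, derivative_X,
      derivative_natCast, derivative_ofNat, C_eq_natCast, map_ofNat, map_add, map_one,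
      Nat.cast_ofNat, pow_one] at h
    simp only [Function.iterate_succ_apply', Function.iterate_zero, id_eq]
    push_cast
    linear_combination h
  | succ k ih =>
    have h := congrArg derivative ih
    simp only [derivative_mul, derivative_add, derivative_sub, derivative_one, derivative_X_pow,
      derivative_X, derivative_natCast, derivative_ofNat, C_eq_natCast, map_ofNat, map_add,
      map_one, Nat.cast_ofNat, pow_one] at h
    simp only [Function.iterate_succ_apply'] at h ⊢
    push_cast
    push_cast at h
    linear_combination h

lemma ode_n (n : ℕ) :
    (X^2-1) * derivative (derivative (Vp n)) =
      (-2) * (X * derivative (Vp n)) + ((n:ℝ[X])*((n:ℝ[X])+1)) * Vp n := by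
  have h := odeQ n n
  simp only [Function.iterate_succ_apply'] at h
  rw [Vp]
  linear_combination h

noncomputable def Gp (n : ℕ) : ℝ[X] :=
  ((n:ℝ[X])*((n:ℝ[X])+1)) * ((1 - X^2) * (Vp n)^2) + (1 - X^2)^2 * (derivative (Vp n))^2

lemma dGp (n : ℕ) :
    derivative (Gp n) = (-2*((n:ℝ[X])*((n:ℝ[X])+1))) * (X * (Vp n)^2) := by
  have h := ode_n n
  simp only [Gp, derivative_mul, derivative_add, derivative_sub, derivative_one,
    derivative_X_pow, derivative_X, derivative_natCast, derivative_pow, C_eq_natCast,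
    map_ofNat, Nat.cast_ofNat, pow_one]
  linear_combination (2*(X^2-1)*derivative (Vp n)) * h

lemma U_expand (n : ℕ) : ((X^2-1:ℝ[X])^n) =
    ∑ k ∈ Finset.range (n+1), C ((-1:ℝ)^(n-k) * (n.choose k)) * X^(2*k) := by
  have h : (X^2-1:ℝ[X]) = X^2 + (-1) := by ring
  rw [h, add_pow]
  refine Finset.sum_congr rfl fun k _ => ?_
  rw [← pow_mul]
  have h2 : ((-1:ℝ[X]))^(n-k) = C ((-1:ℝ)^(n-k)) := by
    rw [map_pow, map_neg, map_one]
  rw [h2]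
  rw [map_mul, C_eq_natCast]
  ring

lemma coeffU_odd (n j : ℕ) : ((X^2-1:ℝ[X])^n).coeff (2*j+1) = 0 := by
  rw [U_expand, finset_sum_coeff]
  apply Finset.sum_eq_zero; intro k _
  rw [coeff_C_mul, coeff_X_pow]
  have : ¬ (2*j+1 = 2*k) := by omega
  simp [this]

lemma coeffU_even (n j : ℕ) (h : j ≤ n) :
    ((X^2-1:ℝ[X])^n).coeff (2*j) = (-1:ℝ)^(n-j) * (n.choose j) := by
  rw [U_expand, finset_sum_coeff]
  rw [Finset.sum_eq_single j]
  · rw [coeff_C_mul, coeff_X_pow]; simp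
  · intro k _ hk
    rw [coeff_C_mul, coeff_X_pow]
    have : ¬ (2*j = 2*k) := by omega
    simp [this]
  · intro hj; exact absurd (Finset.mem_range.2 (by omega)) hj

lemma eval0_Vp (n : ℕ) : (Vp n).eval 0 = (n.factorial : ℝ) * ((X^2-1:ℝ[X])^n).coeff n := by
  rw [Vp, ← coeff_zero_eq_eval_zero, coeff_iterate_derivative]
  simp only [zero_add, Nat.descFactorial_self, nsmul_eq_mul]

lemma eval0_dVp (n : ℕ) : (derivative (Vp n)).eval 0
    = ((n+1).factorial : ℝ) * ((X^2-1:ℝ[X])^n).coeff (n+1) := by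
  rw [Vp, ← Function.iterate_succ_apply' derivative, ← coeff_zero_eq_eval_zero,
    coeff_iterate_derivative]
  simp only [zero_add, Nat.descFactorial_self, nsmul_eq_mul]

lemma cb_sq (m : ℕ) : (Nat.centralBinom m)^2 * (3*m+1) ≤ 16^m := by
  induction m with
  | zero => simp [Nat.centralBinom]
  | succ m ih =>
    have h := Nat.succ_mul_centralBinom_succ m
    have h2 : (Nat.centralBinom (m+1))^2 * (3*(m+1)+1) * (m+1)^2
        = (Nat.centralBinom m)^2 * (4*(2*m+1)^2*(3*m+4)) := by
      have : ((m+1) * Nat.centralBinom (m+1))^2 = (2*(2*m+1)*Nat.centralBinom m)^2 := by rw [h]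
      nlinarith [this]
    have h3 : 4*(2*m+1)^2*(3*m+4) ≤ 16*((m+1)^2*(3*m+1)) := by nlinarith
    have h4 : (Nat.centralBinom m)^2 * (4*(2*m+1)^2*(3*m+4))
        ≤ 16*(m+1)^2*((Nat.centralBinom m)^2*(3*m+1)) := by
      calc (Nat.centralBinom m)^2 * (4*(2*m+1)^2*(3*m+4))
          ≤ (Nat.centralBinom m)^2 * (16*((m+1)^2*(3*m+1))) := Nat.mul_le_mul_left _ h3
        _ = 16*(m+1)^2*((Nat.centralBinom m)^2*(3*m+1)) := by ring
    have h5 : (Nat.centralBinom (m+1))^2 * (3*(m+1)+1) * (m+1)^2 ≤ 16^(m+1) * (m+1)^2 := by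
      calc (Nat.centralBinom (m+1))^2 * (3*(m+1)+1) * (m+1)^2
          = (Nat.centralBinom m)^2 * (4*(2*m+1)^2*(3*m+4)) := h2
        _ ≤ 16*(m+1)^2*((Nat.centralBinom m)^2*(3*m+1)) := h4
        _ ≤ 16*(m+1)^2*16^m := Nat.mul_le_mul_left _ ih
        _ = 16^(m+1) * (m+1)^2 := by ring
    exact Nat.le_of_mul_le_mul_right h5 (by positivity)

lemma neg_one_pow_sq (k : ℕ) : ((-1:ℝ)^k)^2 = 1 := by
  rw [← pow_mul, mul_comm, pow_mul]; norm_num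

lemma eval0_Gp (n : ℕ) : (Gp n).eval 0
    = (n:ℝ)*((n:ℝ)+1) * ((Vp n).eval 0)^2 + ((derivative (Vp n)).eval 0)^2 := by
  simp [Gp]

lemma Gp_zero_le (n : ℕ) (hn : 1 ≤ n) :
    (n:ℝ) * (Gp n).eval 0 ≤ 2*((n:ℝ)*((n:ℝ)+1)) * ((2:ℝ)^n * n.factorial)^2 := by
  rw [eval0_Gp, eval0_Vp, eval0_dVp]
  rcases Nat.even_or_odd n with ⟨m, hm⟩ | ⟨m, hm⟩
  · -- n = 2m, m ≥ 1
    have hm1 : 1 ≤ m := by omega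
    have hn2 : n = 2*m := by omega
    have e1 : ((X^2-1:ℝ[X])^n).coeff n = (-1:ℝ)^(n-m) * (Nat.centralBinom m) := by
      have h := coeffU_even n m (by omega)
      rw [show 2*m = n by omega] at h
      rw [h, Nat.centralBinom, show 2*m = n by omega]
    have e2 : ((X^2-1:ℝ[X])^n).coeff (n+1) = 0 := by
      rw [show n + 1 = 2*m+1 by omega]; exact coeffU_odd n m
    rw [e1, e2]
    have keyN : n * (Nat.centralBinom m)^2 ≤ 2*16^m := by
      have h1 : (Nat.centralBinom m)^2 * n ≤ (Nat.centralBinom m)^2 * (3*m+1) := by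
        apply Nat.mul_le_mul_left; omega
      calc n * (Nat.centralBinom m)^2 = (Nat.centralBinom m)^2 * n := by ring
        _ ≤ 16^m := le_trans h1 (cb_sq m)
        _ ≤ 2*16^m := by omega
    have keyR : (n:ℝ) * ((Nat.centralBinom m : ℝ))^2 ≤ 2*((2:ℝ)^n)^2 := by
      have h16 : ((2:ℝ)^n)^2 = (16:ℝ)^m := by
        rw [← pow_mul, show n*2 = 4*m by omega, pow_mul]; norm_num
      rw [h16]; exact_mod_cast keyN
    have expand : (n:ℝ) * ((n:ℝ)*((n:ℝ)+1) * ((n.factorial:ℝ) * ((-1:ℝ)^(n-m) * (Nat.centralBinom m:ℝ)))^2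
          + (((n+1).factorial:ℝ) * 0)^2)
        = ((n:ℝ)*((n:ℝ)+1) * (n.factorial:ℝ)^2) * ((n:ℝ) * ((Nat.centralBinom m : ℝ))^2) := by
      simp only [mul_pow, neg_one_pow_sq]; ring
    rw [expand]
    calc ((n:ℝ)*((n:ℝ)+1) * (n.factorial:ℝ)^2) * ((n:ℝ) * ((Nat.centralBinom m : ℝ))^2)
        ≤ ((n:ℝ)*((n:ℝ)+1) * (n.factorial:ℝ)^2) * (2*((2:ℝ)^n)^2) :=
          mul_le_mul_of_nonneg_left keyR (by positivity)
      _ = 2*((n:ℝ)*((n:ℝ)+1)) * ((2:ℝ)^n * n.factorial)^2 := by ring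
  · -- n = 2m+1
    have hn2 : n = 2*m+1 := by omega
    have e1 : ((X^2-1:ℝ[X])^n).coeff n = 0 := by
      rw [show n = 2*m+1 from hn2]
      conv_lhs => rw [show (2*m+1 : ℕ) = n from hn2.symm]
      rw [show n = 2*m+1 from hn2]
      exact coeffU_odd (2*m+1) m
    have e2 : ((X^2-1:ℝ[X])^n).coeff (n+1) = (-1:ℝ)^(n-(m+1)) * (n.choose (m+1)) := by
      rw [show n + 1 = 2*(m+1) by omega]; exact coeffU_even n (m+1) (by omega)
    rw [e1, e2]
    have hch : (n.choose (m+1)) ≤ 2 * Nat.centralBinom m := by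
      rw [hn2]
      have pascal : (2*m+1).choose (m+1) = (2*m).choose m + (2*m).choose (m+1) :=
        Nat.choose_succ_succ (2*m) m
      have hmid : (2*m).choose (m+1) ≤ (2*m).choose ((2*m)/2) := Nat.choose_le_middle _ _
      rw [show (2*m)/2 = m by omega] at hmid
      rw [Nat.centralBinom]
      omega
    have keyN : (2*m+2) * (n.choose (m+1))^2 ≤ 8 * 16^m := by
      have hcb := cb_sq m
      have h1 : (n.choose (m+1))^2 ≤ 4 * (Nat.centralBinom m)^2 := by
        calc (n.choose (m+1))^2 ≤ (2*Nat.centralBinom m)^2 := Nat.pow_le_pow_left hch 2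
          _ = 4 * (Nat.centralBinom m)^2 := by ring
      have h2 : (2*m+2) * (n.choose (m+1))^2 * (3*m+1)
          ≤ (2*m+2) * (4 * (Nat.centralBinom m)^2) * (3*m+1) :=
        Nat.mul_le_mul (Nat.mul_le_mul_left _ h1) le_rfl
      have h3 : (2*m+2) * (4 * (Nat.centralBinom m)^2) * (3*m+1)
          ≤ (2*m+2)*4*16^m := by
        calc (2*m+2) * (4 * (Nat.centralBinom m)^2) * (3*m+1)
            = (2*m+2)*4*((Nat.centralBinom m)^2*(3*m+1)) := by ring
          _ ≤ (2*m+2)*4*16^m := Nat.mul_le_mul_left _ hcb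
      have h4 : (2*m+2)*4*16^m ≤ 8 * 16^m * (3*m+1) := by
        calc (2*m+2)*4*16^m = (8*m+8)*16^m := by ring
          _ ≤ (8*(3*m+1))*16^m := Nat.mul_le_mul_right _ (by omega)
          _ = 8 * 16^m * (3*m+1) := by ring
      exact Nat.le_of_mul_le_mul_right (le_trans h2 (le_trans h3 h4)) (by omega)
    have keyR : ((n:ℝ)+1) * ((n.choose (m+1) : ℝ))^2 ≤ 2*((2:ℝ)^n)^2 := by
      have h16 : 2*((2:ℝ)^n)^2 = 8*(16:ℝ)^m := by
        rw [← pow_mul, show n*2 = 4*m+2 by omega, pow_add, pow_mul]; norm_num; ring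
      have hn1 : (n:ℝ)+1 = ((2*m+2 : ℕ) : ℝ) := by rw [hn2]; push_cast; ring
      rw [h16, hn1]; exact_mod_cast keyN
    have hfacs : ((n+1).factorial : ℝ) = ((n:ℝ)+1) * (n.factorial:ℝ) := by
      rw [Nat.factorial_succ]; push_cast; ring
    have expand : (n:ℝ) * ((n:ℝ)*((n:ℝ)+1) * ((n.factorial:ℝ) * 0)^2
          + (((n+1).factorial:ℝ) * ((-1:ℝ)^(n-(m+1)) * (n.choose (m+1):ℝ)))^2)
        = ((n:ℝ)*((n:ℝ)+1) * (n.factorial:ℝ)^2) * (((n:ℝ)+1) * ((n.choose (m+1):ℝ))^2) := by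
      rw [hfacs]
      simp only [mul_pow, neg_one_pow_sq]; ring
    rw [expand]
    calc ((n:ℝ)*((n:ℝ)+1) * (n.factorial:ℝ)^2) * (((n:ℝ)+1) * ((n.choose (m+1):ℝ))^2)
        ≤ ((n:ℝ)*((n:ℝ)+1) * (n.factorial:ℝ)^2) * (2*((2:ℝ)^n)^2) :=
          mul_le_mul_of_nonneg_left keyR (by positivity)
      _ = 2*((n:ℝ)*((n:ℝ)+1)) * ((2:ℝ)^n * n.factorial)^2 := by ring

lemma Gp_le_zero (n : ℕ) (x : ℝ) (hx : x ∈ Set.Icc (-1:ℝ) 1) :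
    (Gp n).eval x ≤ (Gp n).eval 0 := by
  have hderiv : ∀ y : ℝ, deriv (fun t : ℝ => (Gp n).eval t) y
      = (-2*((n:ℝ)*((n:ℝ)+1))) * (y * ((Vp n).eval y)^2) := by
    intro y
    rw [Polynomial.deriv, dGp]
    push_cast
    simp
  rcases le_or_gt x 0 with h | h
  · have hmono : MonotoneOn (fun t : ℝ => (Gp n).eval t) (Set.Icc (-1:ℝ) 0) := by
      apply monotoneOn_of_deriv_nonneg (convex_Icc _ _)
      · exact (Polynomial.continuous _).continuousOn
      · intro y hy
        exact (Polynomial.differentiable _).differentiableAt.differentiableWithinAt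
      · intro y hy
        rw [interior_Icc] at hy
        rw [hderiv]
        have hy0 : y ≤ 0 := le_of_lt hy.2
        nlinarith [sq_nonneg ((Vp n).eval y), Nat.cast_nonneg (α := ℝ) n,
          mul_nonneg (mul_nonneg (Nat.cast_nonneg (α := ℝ) n)
            (by positivity : (0:ℝ) ≤ ((n:ℝ)+1)))
            (mul_nonneg (neg_nonneg.2 hy0) (sq_nonneg ((Vp n).eval y)))]
    exact hmono ⟨hx.1, h⟩ ⟨by norm_num, le_refl 0⟩ h
  · have hanti : AntitoneOn (fun t : ℝ => (Gp n).eval t) (Set.Icc (0:ℝ) 1) := by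
      apply antitoneOn_of_deriv_nonpos (convex_Icc _ _)
      · exact (Polynomial.continuous _).continuousOn
      · intro y hy
        exact (Polynomial.differentiable _).differentiableAt.differentiableWithinAt
      · intro y hy
        rw [interior_Icc] at hy
        rw [hderiv]
        have hy0 : 0 ≤ y := le_of_lt hy.1
        nlinarith [sq_nonneg ((Vp n).eval y), Nat.cast_nonneg (α := ℝ) n, mul_nonneg (mul_nonneg (Nat.cast_nonneg (α := ℝ) n) (by positivity : (0:ℝ) ≤ ((n:ℝ)+1))) (mul_nonneg hy0 (sq_nonneg ((Vp n).eval y)))]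
    exact hanti ⟨le_refl 0, by norm_num⟩ ⟨le_of_lt h, hx.2⟩ (le_of_lt h)

lemma legendre_sq_le (m : ℕ) (hm : 1 ≤ m) (x : ℝ) (hx : x ∈ Set.Icc (-0.9:ℝ) 0.9) :
    (legendreP m x)^2 ≤ 11 / m := by
  have hx1 : x ∈ Set.Icc (-1:ℝ) 1 := ⟨by linarith [hx.1], by linarith [hx.2]⟩
  have hxsq : x^2 ≤ 0.81 := by nlinarith [hx.1, hx.2]
  have hc : (0:ℝ) < (2:ℝ)^m * m.factorial := by positivity
  have hmR : (0:ℝ) < (m:ℝ) := by exact_mod_cast hm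
  have hlam : (0:ℝ) < (m:ℝ)*((m:ℝ)+1) := by positivity
  -- lower bound of Gp at x
  have hGx : (m:ℝ)*((m:ℝ)+1) * ((1 - x^2) * ((Vp m).eval x)^2) ≤ (Gp m).eval x := by
    have : (Gp m).eval x = (m:ℝ)*((m:ℝ)+1) * ((1 - x^2) * ((Vp m).eval x)^2)
        + (1-x^2)^2 * ((derivative (Vp m)).eval x)^2 := by simp [Gp]
    rw [this]
    nlinarith [sq_nonneg ((1-x^2)) , sq_nonneg ((derivative (Vp m)).eval x),
      mul_nonneg (sq_nonneg (1-x^2)) (sq_nonneg ((derivative (Vp m)).eval x))]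
  have chain : (m:ℝ) * ((m:ℝ)*((m:ℝ)+1) * ((1 - x^2) * ((Vp m).eval x)^2))
      ≤ 2*((m:ℝ)*((m:ℝ)+1)) * ((2:ℝ)^m * m.factorial)^2 := by
    calc (m:ℝ) * ((m:ℝ)*((m:ℝ)+1) * ((1 - x^2) * ((Vp m).eval x)^2))
        ≤ (m:ℝ) * (Gp m).eval x := by
          apply mul_le_mul_of_nonneg_left hGx (le_of_lt hmR)
      _ ≤ (m:ℝ) * (Gp m).eval 0 :=
          mul_le_mul_of_nonneg_left (Gp_le_zero m x hx1) (le_of_lt hmR)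
      _ ≤ 2*((m:ℝ)*((m:ℝ)+1)) * ((2:ℝ)^m * m.factorial)^2 := Gp_zero_le m hm
  -- divide out
  have hv : (m:ℝ) * (1 - x^2) * ((Vp m).eval x)^2 ≤ 2 * ((2:ℝ)^m * m.factorial)^2 := by
    have := (mul_le_mul_iff_right₀ hlam).mp (by linarith [chain] :
      ((m:ℝ)*((m:ℝ)+1)) * ((m:ℝ) * ((1 - x^2) * ((Vp m).eval x)^2))
        ≤ ((m:ℝ)*((m:ℝ)+1)) * (2 * ((2:ℝ)^m * m.factorial)^2))
    linarith [this]
  have h19 : (0.19:ℝ) ≤ 1 - x^2 := by linarith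
  have hP : legendreP m x = (1 / ((2:ℝ)^m * m.factorial)) * (Vp m).eval x := legendreP_eq m x
  rw [hP]
  have hgoal : ((1 / ((2:ℝ)^m * m.factorial)) * (Vp m).eval x)^2
      = ((Vp m).eval x)^2 / ((2:ℝ)^m * m.factorial)^2 := by
    field_simp
  rw [hgoal, div_le_div_iff₀ (by positivity) hmR]
  have hvx : (m:ℝ) * 0.19 * ((Vp m).eval x)^2 ≤ 2 * ((2:ℝ)^m * m.factorial)^2 := by
    nlinarith [sq_nonneg ((Vp m).eval x), hv, h19, hmR]
  nlinarith [hvx]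

end LegendreAux

lemma Bterm_sq_le_aux (K : ℕ) (b : ℕ → ℝ) (G : ℕ → ℝ → ℝ)
    (hbk : ∀ i, 1 ≤ i → i ≤ K → b i ∈ Set.Icc (-0.9 : ℝ) 0.9)
    (n : ℕ) (hn : 2 ≤ n) :
    Bterm K b G n ^ 2 ≤ 11 * jumpSum K b G ^ 2 * (((n:ℝ))^2)⁻¹ := by
  have hnR : (2:ℝ) ≤ (n:ℝ) := by exact_mod_cast hn
  set S := jumpSum K b G with hS
  have hS0 : 0 ≤ S := Finset.sum_nonneg fun i _ => abs_nonneg _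
  set M : ℝ := Real.sqrt (44/((n:ℝ)-1)) with hM
  have hM0 : 0 ≤ M := Real.sqrt_nonneg _
  have hM2 : M^2 = 44/((n:ℝ)-1) := by
    have h1 : (0:ℝ) < (n:ℝ)-1 := by linarith
    exact Real.sq_sqrt (by positivity)
  -- bound each legendre difference
  have hDelta : ∀ i, 1 ≤ i → i ≤ K →
      |legendreP (n + 1) (b i) - legendreP (n - 1) (b i)| ≤ M := by
    intro i h1 h2
    have hb := hbk i h1 h2
    have hp1 : (legendreP (n+1) (b i))^2 ≤ 11/((n:ℝ)+1) := by
      have := legendre_sq_le (n+1) (by omega) (b i) hb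
      rwa [Nat.cast_add, Nat.cast_one] at this
    have hp2 : (legendreP (n-1) (b i))^2 ≤ 11/((n:ℝ)-1) := by
      have := legendre_sq_le (n-1) (by omega) (b i) hb
      rwa [Nat.cast_sub (by omega : 1 ≤ n), Nat.cast_one] at this
    rw [← Real.sqrt_sq_eq_abs]
    apply Real.sqrt_le_sqrt
    have hsq : (legendreP (n + 1) (b i) - legendreP (n - 1) (b i))^2
        ≤ 2*(legendreP (n+1) (b i))^2 + 2*(legendreP (n-1) (b i))^2 := by
      nlinarith [sq_nonneg (legendreP (n + 1) (b i) + legendreP (n - 1) (b i))]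
    have h11 : 11/((n:ℝ)+1) ≤ 11/((n:ℝ)-1) := by
      apply div_le_div_of_nonneg_left (by norm_num) (by linarith) (by linarith)
    calc (legendreP (n + 1) (b i) - legendreP (n - 1) (b i))^2
        ≤ 2*(11/((n:ℝ)-1)) + 2*(11/((n:ℝ)-1)) := by linarith
      _ = 44/((n:ℝ)-1) := by ring
  -- bound the sum
  have hT : |∑ i ∈ Finset.Icc 1 K, (G (i - 1) (b i) - G i (b i)) *
      (legendreP (n + 1) (b i) - legendreP (n - 1) (b i))| ≤ S * M := by
    calc |∑ i ∈ Finset.Icc 1 K, (G (i - 1) (b i) - G i (b i)) *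
          (legendreP (n + 1) (b i) - legendreP (n - 1) (b i))|
        ≤ ∑ i ∈ Finset.Icc 1 K, |(G (i - 1) (b i) - G i (b i)) *
          (legendreP (n + 1) (b i) - legendreP (n - 1) (b i))| :=
          Finset.abs_sum_le_sum_abs _ _
      _ ≤ ∑ i ∈ Finset.Icc 1 K, |G i (b i) - G (i - 1) (b i)| * M := by
          apply Finset.sum_le_sum
          intro i hi
          rw [Finset.mem_Icc] at hi
          rw [abs_mul, abs_sub_comm (G (i-1) (b i))]
          exact mul_le_mul_of_nonneg_left (hDelta i hi.1 hi.2) (abs_nonneg _)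
      _ = S * M := by rw [hS, jumpSum, Finset.sum_mul]
  have hsqrt : (0:ℝ) < Real.sqrt (2*(n:ℝ)+1) := Real.sqrt_pos.2 (by linarith)
  have hsq1 : (1 / (2 * Real.sqrt (2 * (n : ℝ) + 1)))^2 = 1/(4*(2*(n:ℝ)+1)) := by
    rw [div_pow, mul_pow, Real.sq_sqrt (by linarith : (0:ℝ) ≤ 2*(n:ℝ)+1)]
    norm_num
  have hB2 : Bterm K b G n ^ 2 ≤ 1/(4*(2*(n:ℝ)+1)) * (S*M)^2 := by
    rw [Bterm, mul_pow, hsq1]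
    apply mul_le_mul_of_nonneg_left _ (by positivity)
    rw [← Real.sqrt_sq_eq_abs] at hT
    calc (∑ i ∈ Finset.Icc 1 K, (G (i - 1) (b i) - G i (b i)) *
          (legendreP (n + 1) (b i) - legendreP (n - 1) (b i)))^2
        = |∑ i ∈ Finset.Icc 1 K, (G (i - 1) (b i) - G i (b i)) *
          (legendreP (n + 1) (b i) - legendreP (n - 1) (b i))|^2 := (sq_abs _).symm
      _ ≤ (S*M)^2 := by
          apply pow_le_pow_left₀ (abs_nonneg _) _ 2
          rw [Real.sqrt_sq_eq_abs] at hT; exact hT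
  calc Bterm K b G n ^ 2 ≤ 1/(4*(2*(n:ℝ)+1)) * (S*M)^2 := hB2
    _ = S^2 * (11 / ((2*(n:ℝ)+1)*((n:ℝ)-1))) := by
        rw [mul_pow, hM2]
        have hne1 : ((n:ℝ)-1) ≠ 0 := by intro h; nlinarith
        have hne2 : (2*(n:ℝ)+1) ≠ 0 := by intro h; nlinarith
        field_simp
        ring
    _ ≤ 11 * S ^ 2 * (((n:ℝ))^2)⁻¹ := by
        have h1 : (n:ℝ)^2 ≤ (2*(n:ℝ)+1)*((n:ℝ)-1) := by nlinarith
        have h2 : 11 / ((2*(n:ℝ)+1)*((n:ℝ)-1)) ≤ 11 / (n:ℝ)^2 := by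
          apply div_le_div_of_nonneg_left (by norm_num) (by positivity) h1
        calc S^2 * (11 / ((2*(n:ℝ)+1)*((n:ℝ)-1))) ≤ S^2 * (11/(n:ℝ)^2) :=
              mul_le_mul_of_nonneg_left h2 (sq_nonneg S)
          _ = 11 * S ^ 2 * (((n:ℝ))^2)⁻¹ := by ring

/-- with interior breakpoints in [-0.9, 0.9], there is a universal
constant C > 0 bounding the tail sum of the squared jump terms by C·S²·ζ(2, N). -/
theorem tsum_Bterm_sq_le :
    ∃ C : ℝ, 0 < C ∧
      ∀ (K : ℕ) (b : ℕ → ℝ) (L : ℝ) (G : ℕ → ℝ → ℝ) (g : ℝ → ℝ),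
        b 0 = -1 → b (K + 1) = 1 →
        (∀ i ≤ K, b i < b (i + 1)) →
        0 ≤ L →
        (∀ i ≤ K, ContDiffOn ℝ 1 (G i) (Set.Icc (b i) (b (i + 1)))) →
        (∀ i ≤ K, ∀ y ∈ Set.Icc (b i) (b (i + 1)),
          |derivWithin (G i) (Set.Icc (b i) (b (i + 1))) y| ≤ L) →
        (∀ i < K, ∀ y, b i ≤ y → y < b (i + 1) → g y = G i y) →
        (∀ y ∈ Set.Icc (b K) (b (K + 1)), g y = G K y) →
        (∀ i, 1 ≤ i → i ≤ K → b i ∈ Set.Icc (-0.9 : ℝ) 0.9) →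
        ∀ N : ℕ, 2 ≤ N →
          (∑' k : ℕ, Bterm K b G (N + k) ^ 2) ≤ C * jumpSum K b G ^ 2 * hzeta 2 N := by
  refine ⟨11, by norm_num, ?_⟩
  intro K b L G g hb0 hbK1 hlt hL hcd hbd hg1 hg2 hbk N hN
  set S := jumpSum K b G with hS
  have hterm : ∀ k : ℕ, Bterm K b G (N+k)^2 ≤ 11 * S^2 * ((((N+k : ℕ):ℝ))^2)⁻¹ := by
    intro k
    exact Bterm_sq_le_aux K b G hbk (N+k) (by omega)
  have hbase : Summable (fun k : ℕ => (((k:ℝ))^2)⁻¹) := by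
    have := (Real.summable_one_div_nat_pow (p := 2)).2 one_lt_two
    simpa [one_div] using this
  have hshift : Summable (fun k : ℕ => ((((N+k : ℕ):ℝ))^2)⁻¹) := by
    have := (summable_nat_add_iff (f := fun k : ℕ => (((k:ℝ))^2)⁻¹) N).2 hbase
    simpa [add_comm] using this
  have hg : Summable (fun k : ℕ => 11 * S^2 * ((((N+k : ℕ):ℝ))^2)⁻¹) := hshift.mul_left _
  have hf : Summable (fun k : ℕ => Bterm K b G (N+k)^2) :=
    Summable.of_nonneg_of_le (fun k => sq_nonneg _) hterm hg
  have hle := Summable.tsum_le_tsum hterm hf hg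
  have heq : (∑' k : ℕ, 11 * S^2 * ((((N+k : ℕ):ℝ))^2)⁻¹) = 11 * S ^ 2 * hzeta 2 N := by
    rw [tsum_mul_left, hzeta]
    congr 1
    apply tsum_congr
    intro k
    have hpos' : (0:ℝ) < (k:ℝ) + N := by
      have h1 : (0:ℝ) ≤ (k:ℝ) := Nat.cast_nonneg k
      have h2 : (2:ℝ) ≤ (N:ℝ) := by exact_mod_cast hN
      linarith
    rw [Real.rpow_neg (le_of_lt hpos'), show ((2:ℝ)) = ((2:ℕ):ℝ) by norm_num,
      Real.rpow_natCast]
    push_cast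
    rw [add_comm]
  rw [← heq]
  exact hle
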